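/- Let R be a unital hom-associative ring with twisting map α (so R has a multiplicative identity 1). Then for every b ∈ R one has α(b) = b·α(1), and consequently every right ideal I of R (an additive subgroup with I·R ⊆ I) satisfies α(I) ⊆ I, i.e. every right ideal of R is a right hom-ideal. -/
import Mathlib


/-- A non-unital hom-associative ring structure on an additive abelian group `R`:
a biadditive multiplication `mul` and an additive twisting map `α` satisfying
`α a * (b * c) = (a * b) * α c`. -/
structure IsHomRing {R : Type*} [AddCommGroup R] (mul : R → R → R) (α : R → R) : Prop where
  add_mul : ∀ a b c : R, mul (a + b) c = mul a c + mul b c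
  mul_add : ∀ a b c : R, mul a (b + c) = mul a b + mul a c
  alpha_add : ∀ a b : R, α (a + b) = α a + α b
  hom_assoc : ∀ a b c : R, mul (α a) (mul b c) = mul (mul a b) (α c)

/-- A right `R`-hom-module structure on an additive abelian group `M`:
a biadditive scalar multiplication `smul : M → R → M` and an additive map `αM`
satisfying `αM m • (r * s) = (m • r) • αR s`. -/
structure IsHomModule {R M : Type*} [AddCommGroup R] [AddCommGroup M]
    (mul : R → R → R) (αR : R → R) (smul : M → R → M) (αM : M → M) : Prop where
  add_smul : ∀ (m n : M) (r : R), smul (m + n) r = smul m r + smul n r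
  smul_add : ∀ (m : M) (r s : R), smul m (r + s) = smul m r + smul m s
  alpha_add : ∀ m n : M, αM (m + n) = αM m + αM n
  hom_assoc : ∀ (m : M) (r s : R), smul (αM m) (mul r s) = smul (smul m r) (αR s)

/-- A hom-submodule: an additive subgroup (as a set) closed under the scalar
multiplication and invariant under the twisting map. -/
structure IsHomSubmodule {R M : Type*} [AddCommGroup M]
    (smul : M → R → M) (αM : M → M) (N : Set M) : Prop where
  zero_mem : (0 : M) ∈ N
  add_mem : ∀ a b : M, a ∈ N → b ∈ N → a + b ∈ N
  neg_mem : ∀ a : M, a ∈ N → -a ∈ N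
  smul_mem : ∀ a : M, a ∈ N → ∀ r : R, smul a r ∈ N
  alpha_mem : ∀ a : M, a ∈ N → αM a ∈ N

/-- A morphism of right `R`-hom-modules: an additive map commuting with the
twisting maps and preserving scalar multiplication. -/
def IsHomModuleHom {R M M' : Type*} [AddCommGroup M] [AddCommGroup M']
    (smul : M → R → M) (αM : M → M) (smul' : M' → R → M') (αM' : M' → M')
    (f : M → M') : Prop :=
  (∀ a b : M, f (a + b) = f a + f b) ∧ (∀ m : M, f (αM m) = αM' (f m)) ∧
    ∀ (m : M) (r : R), f (smul m r) = smul' (f m) r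

/-- A right hom-module is hom-noetherian if it has no infinite strictly
ascending chain of hom-submodules. -/
def HomNoetherian {R M : Type*} [AddCommGroup M] (smul : M → R → M) (αM : M → M) : Prop :=
  ¬ ∃ c : ℕ → Set M, (∀ n, IsHomSubmodule smul αM (c n)) ∧ ∀ n, c n ⊂ c (n + 1)

/-- in a unital hom-associative ring, α(b) = b·α(1) for every b, and
consequently every right ideal is invariant under α, i.e. is a right hom-ideal. -/
theorem unital_homRing_right_ideal_invariant {R : Type*} [AddCommGroup R]
    (mul : R → R → R) (α : R → R) (hR : IsHomRing mul α)
    (one : R) (hone : ∀ a : R, mul one a = a) (hone' : ∀ a : R, mul a one = a) :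
    (∀ b : R, α b = mul b (α one)) ∧
    ∀ I : Set R, (0 : R) ∈ I → (∀ a b : R, a ∈ I → b ∈ I → a + b ∈ I) →
      (∀ a : R, a ∈ I → -a ∈ I) → (∀ a ∈ I, ∀ r : R, mul a r ∈ I) →
      ∀ a ∈ I, α a ∈ I := by
  have key : ∀ b : R, α b = mul b (α one) := fun b => by
    have := hR.hom_assoc b one one
    rwa [hone one, hone' (α b), hone' b] at this
  exact ⟨key, fun I _ _ _ hsm a ha => key a ▸ hsm a ha (α one)⟩
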